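/- Let G be a DAG with distinguished vertices A ≠ Ŷ such that no vertex is a parent of A and every vertex other than A and Ŷ is a parent of Ŷ. If u ∈ X(P), w is a vertex with w ∉ {A, Ŷ}, and there is a directed edge u → w, then there exists an active path from A to Ŷ containing both u and w, on which u occurs before w. (The first case in the proof of Proposition 3.) -/

import Mathlib

/-- A path in a directed graph `D`: a list of at least two pairwise distinct
vertices in which every two consecutive vertices `u, v` satisfy `D u v` or `D v u`. -/
def IsPath {V : Type*} (D : V → V → Prop) (p : List V) : Prop :=
  2 ≤ p.length ∧ p.Nodup ∧ p.Chain' (fun u v => D u v ∨ D v u)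

/-- A path is active if no internal vertex on it is a collider. -/
def IsActive {V : Type*} (D : V → V → Prop) (p : List V) : Prop :=
  ∀ a b c : V, [a, b, c] <:+: p → ¬ (D a b ∧ D c b)

/-- An active path from `A` to `Yh`. -/
def IsActivePathFromTo {V : Type*} (D : V → V → Prop) (A Yh : V) (p : List V) : Prop :=
  IsPath D p ∧ IsActive D p ∧ p.head? = some A ∧ p.getLast? = some Yh

/-- `u` occurs before `v` on the list `p`. -/
def OccursBefore {V : Type*} (p : List V) (u v : V) : Prop :=
  ∃ i j : Fin p.length, i < j ∧ p.get i = u ∧ p.get j = v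

/-- `x ∈ X(P)`: `x` is a vertex other than `A` and `Yh` lying on some active
path from `A` to `Yh`. -/
def InXP {V : Type*} (D : V → V → Prop) (A Yh x : V) : Prop :=
  x ≠ A ∧ x ≠ Yh ∧ ∃ p : List V, IsActivePathFromTo D A Yh p ∧ x ∈ p

lemma active_tail {V : Type*} (D : V → V → Prop) {a : V} {l : List V}
    (h : IsActive D (a :: l)) : IsActive D l :=
  fun x y z hinf => h x y z (hinf.trans (List.suffix_cons a l).isInfix)

lemma chain_forward {V : Type*} (D : V → V → Prop) :
    ∀ (l : List V) (a b : V), IsActive D (a :: b :: l) → D a b →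
      List.Chain' (fun u v => D u v ∨ D v u) (a :: b :: l) →
      List.Chain' D (a :: b :: l) := by
  intro l
  induction l with
  | nil => intro a b _ hab _; exact List.isChain_cons_cons.mpr ⟨hab, List.isChain_singleton b⟩
  | cons c l ih =>
    intro a b hact hab hch
    have hbc : D b c := by
      have h1 : D b c ∨ D c b := (List.isChain_cons_cons.mp (List.isChain_cons_cons.mp hch).2).1
      rcases h1 with h | h
      · exact h
      · exact absurd ⟨hab, h⟩ (hact a b c ⟨[], l, rfl⟩)
    exact List.isChain_cons_cons.mpr
      ⟨hab, ih b c (active_tail D hact) hbc (List.isChain_cons_cons.mp hch).2⟩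

lemma mem_transGen {V : Type*} (D : V → V → Prop) :
    ∀ (l : List V) (x : V), List.Chain D x l → ∀ y ∈ l, Relation.TransGen D x y := by
  intro l
  induction l with
  | nil => intro x _ y hy; simp at hy
  | cons b l ih =>
    intro x hch y hy
    rcases List.chain_cons.mp hch with ⟨hxb, hch'⟩
    rcases List.mem_cons.mp hy with rfl | hy
    · exact Relation.TransGen.single hxb
    · exact (ih b hch' y hy).head hxb

/-- First case in the proof of Proposition 3: in a DAG with no parent of `A`
and where every vertex other than `A` and `Yh` is a parent of `Yh`, if
`u ∈ X(P)`, `w ∉ {A, Yh}` and there is a directed edge `u → w`, then there is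
an active path from `A` to `Yh` containing both `u` and `w` on which `u`
occurs before `w`. -/
theorem exists_active_path_through_edge
    {V : Type*} [Fintype V] (D : V → V → Prop)
    (hirr : Irreflexive D) (hasym : ∀ u v, D u v → ¬ D v u)
    (hdag : Irreflexive (Relation.TransGen D))
    (A Yh : V) (hAY : A ≠ Yh)
    (hA : ∀ w, ¬ D w A)
    (hY : ∀ w, w ≠ A → w ≠ Yh → D w Yh)
    (u w : V) (hu : InXP D A Yh u)
    (hwA : w ≠ A) (hwY : w ≠ Yh)
    (huw : D u w) :
    ∃ p : List V, IsActivePathFromTo D A Yh p ∧ u ∈ p ∧ w ∈ p ∧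
      OccursBefore p u w := by
  obtain ⟨huA, huY, p, ⟨⟨hlen, hnd, hch⟩, hact, hhead, hlast⟩, hup⟩ := hu
  -- p = A :: b :: rest
  obtain ⟨b, rest, rfl⟩ : ∃ b rest, p = A :: b :: rest := by
    match p, hlen, hhead with
    | x :: y :: r, _, hh =>
      have : x = A := by simpa using hh
      exact ⟨y, r, by rw [this]⟩
  set p := A :: b :: rest with hp
  have hDAb : D A b := by
    have h1 : D A b ∨ D b A := (List.isChain_cons_cons.mp hch).1
    rcases h1 with h | h
    · exact h
    · exact absurd h (hA b)
  have hchD : List.Chain' D p := chain_forward D rest A b hact hDAb hch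
  obtain ⟨l1, l2, hpeq⟩ := List.append_of_mem hup
  set pre := l1 ++ [u] with hpre
  have hpeq' : p = pre ++ l2 := by simp [hpre, hpeq]
  have hpre_inf : pre <:+: p := ⟨[], l2, by simp [hpeq'.symm]⟩
  have hpre_chain : List.Chain' D pre := hchD.infix hpre_inf
  have hpre_nodup : pre.Nodup := (hpre_inf.sublist).nodup hnd
  have hpre_last : pre.getLast? = some u := by simp [hpre]
  have hpre_ne : pre ≠ [] := by simp [hpre]
  have hpre_head : pre.head? = some A := by
    obtain ⟨x, hx⟩ : ∃ x, pre.head? = some x := by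
      cases hl : pre with
      | nil => exact absurd hl hpre_ne
      | cons a t => exact ⟨a, by simp [hl]⟩
    rw [hpeq', List.head?_append, hx] at hhead
    simp at hhead
    rw [hx, hhead]
  have huw_ne : u ≠ w := fun h => hirr u (h ▸ huw)
  -- w ∉ pre
  have hw_not_pre : w ∉ pre := by
    intro hwp
    have hwl1 : w ∈ l1 := by
      rcases List.mem_append.mp hwp with h | h
      · exact h
      · simp at h; exact absurd h.symm huw_ne
    obtain ⟨s, t, hst⟩ := List.append_of_mem hwl1
    have hsuf : (w :: (t ++ [u])) <:+ pre := by
      refine ⟨s, ?_⟩; simp [hpre, hst]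
    have hch2 : List.Chain' D (w :: (t ++ [u])) := hpre_chain.suffix hsuf
    have hwu : Relation.TransGen D w u :=
      mem_transGen D (t ++ [u]) w hch2 u (by simp)
    exact hdag w (hwu.tail huw)
  -- Yh ∉ pre
  have hY_not_pre : Yh ∉ pre := by
    intro hYp
    rcases List.eq_nil_or_concat l2 with rfl | ⟨l2', z, rfl⟩
    · have : p.getLast? = some u := by
        rw [hpeq']; simpa using hpre_last
      rw [hlast] at this
      exact huY (Option.some.inj this).symm
    · have hz : p.getLast? = some z := by
        rw [hpeq']
        rw [List.getLast?_append]
        simp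
      have hzY : z = Yh := by rw [hlast] at hz; exact (Option.some.inj hz).symm
      have hnd' : (pre ++ l2'.concat z).Nodup := hpeq' ▸ hnd
      have hdisj := (List.nodup_append'.mp hnd').2.2
      exact hdisj hYp (by simp [hzY])
  -- the new path
  have hchr : List.Chain' D (pre ++ [w, Yh]) := by
    refine List.isChain_append.mpr ⟨hpre_chain, ?_, ?_⟩
    · simp [List.isChain_cons_cons]; exact hY w hwA hwY
    · intro x hx y hy
      rw [hpre_last] at hx
      simp at hx hy
      exact hx ▸ hy ▸ huw
  refine ⟨pre ++ [w, Yh], ⟨⟨?_, ?_, ?_⟩, ?_, ?_, ?_⟩, ?_, ?_, ?_⟩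
  · simp
  · rw [List.nodup_append']
    refine ⟨hpre_nodup, by simp [hwY], ?_⟩
    intro x hx hx2
    simp at hx2
    rcases hx2 with rfl | rfl
    · exact hw_not_pre hx
    · exact hY_not_pre hx
  · exact List.IsChain.imp (fun a b h => Or.inl h) hchr
  · -- active
    intro a b' c hinf ⟨h1, h2⟩
    have := hchr.infix hinf
    have hbc : D b' c := (List.isChain_cons_cons.mp (List.isChain_cons_cons.mp this).2).1
    exact hasym b' c hbc h2
  · rw [List.head?_append, hpre_head]; rfl
  · rw [List.getLast?_append]; rfl
  · simp [hpre]
  · simp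
  · -- OccursBefore
    have hlen' : l1.length + 1 < (pre ++ [w, Yh]).length := by simp [hpre]
    have hlen'' : l1.length < (pre ++ [w, Yh]).length := by simp [hpre]
    refine ⟨⟨l1.length, hlen''⟩, ⟨l1.length + 1, hlen'⟩, by simp, ?_, ?_⟩
    · show ((l1 ++ [u]) ++ [w, Yh])[l1.length]'(by simp [hpre]) = u
      rw [List.getElem_append_left (by simp)]
      exact List.getElem_concat_length rfl _
    · show ((l1 ++ [u]) ++ [w, Yh])[l1.length + 1]'(by simp [hpre]) = w
      rw [List.getElem_append_right (by simp)]
      simp
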